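/- Let s > 0, and suppose k* = Ī/(Ī − I̲) with I̲ < 0 < Ī, Ī + I̲ > 0, and k* < Φ(s). Suppose c ∈ ℝ satisfies both 1 − Φ((c − s²)/s) = k* and 1 − Φ((c + s²)/s) = 1 − k*. Then c = 0 and Φ(s) = k*, contradicting k* < Φ(s); hence no such c exists. (Consequently no linear threshold rule 1{wᵀY ≥ c} satisfies the Γ-MMR optimality conditions in the low-identification-power regime.) -/

import Mathlib

open MeasureTheory ProbabilityTheory Set

/-- The standard normal cumulative distribution function. -/
noncomputable def Phi (x : ℝ) : ℝ :=
  ∫ t in Set.Iic x, ProbabilityTheory.gaussianPDFReal 0 1 t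

lemma gauss_even (t : ℝ) : gaussianPDFReal 0 1 (-t) = gaussianPDFReal 0 1 t := by
  simp [gaussianPDFReal, neg_sq]

lemma Phi_strictMono : StrictMono Phi := by
  intro a b hab
  have hint := integrable_gaussianPDFReal 0 1
  have h := intervalIntegral.integral_Iic_sub_Iic (μ := volume)
    (hint.integrableOn (s := Iic a)) (hint.integrableOn (s := Iic b))
  have hpos : 0 < ∫ x in a..b, gaussianPDFReal 0 1 x := by
    refine intervalIntegral.intervalIntegral_pos_of_pos (hint.intervalIntegrable) ?_ hab
    exact fun x => gaussianPDFReal_pos 0 1 x one_ne_zero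
  have : 0 < Phi b - Phi a := by rw [Phi, Phi, h]; exact hpos
  linarith

lemma Phi_neg (x : ℝ) : Phi (-x) = 1 - Phi x := by
  have hint := integrable_gaussianPDFReal 0 1
  have htot : Phi x + ∫ t in Ioi x, gaussianPDFReal 0 1 t = 1 := by
    rw [Phi, intervalIntegral.integral_Iic_add_Ioi hint.integrableOn hint.integrableOn]
    exact integral_gaussianPDFReal_eq_one 0 one_ne_zero
  have h2 : Phi (-x) = ∫ t in Ioi x, gaussianPDFReal 0 1 t := by
    rw [Phi]
    have : (∫ t in Iic (-x), gaussianPDFReal 0 1 t)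
        = ∫ t in Iic (-x), gaussianPDFReal 0 1 (-t) := by
      simp_rw [gauss_even]
    rw [this, integral_comp_neg_Iic, neg_neg]
  linarith

/-- in the low-identification-power regime `k* = Ī/(Ī−I̲) < Φ(s)`, no threshold
`c` satisfies both `1 − Φ((c − s²)/s) = k*` and `1 − Φ((c + s²)/s) = 1 − k*`; hence no
linear threshold rule satisfies the Γ-MMR optimality conditions. -/
theorem no_threshold_rule_optimal (s Ibar Ilow kstar : ℝ) (hs : 0 < s)
    (hIlow : Ilow < 0) (hIbar : 0 < Ibar) (hsum : 0 < Ibar + Ilow)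
    (hk : kstar = Ibar / (Ibar - Ilow)) (hlt : kstar < Phi s) :
    ¬ ∃ c : ℝ, 1 - Phi ((c - s ^ 2) / s) = kstar ∧
      1 - Phi ((c + s ^ 2) / s) = 1 - kstar := by
  rintro ⟨c, h1, h2⟩
  have e1 : Phi (-((c - s ^ 2) / s)) = kstar := by
    rw [Phi_neg]; linarith
  have e2 : Phi ((c + s ^ 2) / s) = kstar := by linarith
  have heq : -((c - s ^ 2) / s) = (c + s ^ 2) / s :=
    Phi_strictMono.injective (e1.trans e2.symm)
  have hc : c = 0 := by
    field_simp at heq; linarith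
  subst hc
  have : Phi s = kstar := by
    have : (0 + s ^ 2) / s = s := by field_simp [sq]; ring
    rw [this] at e2; exact e2
  linarith
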